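/- For every δ > 0 and every integer k ≥ 2 there exists n₀ such that the following holds for all n ≥ n₀. If H is a 3-graph on n vertices and T ⊆ V(H) is a set of vertices such that at least δn³ edges of H contain a vertex of T, then H contains a double pyramid on 2k+2 vertices with both apexes in T: there are distinct vertices x, y ∈ T and distinct vertices v₁, …, v_{2k} ∈ V(H) \ {x,y} such that {x, v_i, v_{i+1}} and {y, v_i, v_{i+1}} are edges of H for every i (indices modulo 2k). -/

import Mathlib

theorem aux_inj_count {V : Type} [Fintype V] [DecidableEq V] (k : ℕ) (s : Finset V) :
    ((Finset.univ : Finset (Fin k → V)).filter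
      (fun u => Function.Injective u ∧ ∀ i, u i ∈ s)).card = s.card.descFactorial k := by
  have h1 : ((Finset.univ : Finset (Fin k → V)).filter
      (fun u => Function.Injective u ∧ ∀ i, u i ∈ s)).card
      = Fintype.card {u : Fin k → V // Function.Injective u ∧ ∀ i, u i ∈ s} :=
    (Fintype.card_subtype _).symm
  rw [h1]
  have e : {u : Fin k → V // Function.Injective u ∧ ∀ i, u i ∈ s} ≃ (Fin k ↪ {x // x ∈ s}) :=
    { toFun := fun u => ⟨fun i => ⟨u.1 i, u.2.2 i⟩,
        fun i j h => u.2.1 (congrArg Subtype.val h)⟩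
      invFun := fun f => ⟨fun i => (f i).1,
        ⟨fun i j h => f.injective (Subtype.ext h), fun i => (f i).2⟩⟩
      left_inv := fun u => rfl
      right_inv := fun f => by ext i; rfl }
  rw [Fintype.card_congr e, Fintype.card_embedding_eq, Fintype.card_coe, Fintype.card_fin]

theorem aux_desc_lb (d k : ℕ) : (d - k) ^ k ≤ d.descFactorial k := by
  rw [Nat.descFactorial_eq_prod_range]
  calc (d - k) ^ k = ∏ _i ∈ Finset.range k, (d - k) := by
        rw [Finset.prod_const, Finset.card_range]
    _ ≤ ∏ i ∈ Finset.range k, (d - i) :=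
        Finset.prod_le_prod' fun i hi =>
          Nat.sub_le_sub_left (le_of_lt (Finset.mem_range.mp hi)) d


/-- Cycle construction: from a complete bipartite pattern `A`–`B` (each of size `k`)
in the common link of `x` and `y`, build a double pyramid. -/
theorem aux_cycle {V : Type} [Fintype V] [DecidableEq V] [LinearOrder V]
    (k : ℕ) (hk : 1 ≤ k) (E : Finset (Finset V)) (x y : V)
    (A B : Finset V) (hAB : Disjoint A B) (hA : A.card = k) (hB : B.card = k)
    (hAxy : ∀ a ∈ A, a ≠ x ∧ a ≠ y) (hBxy : ∀ b ∈ B, b ≠ x ∧ b ≠ y)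
    (hadj : ∀ a ∈ A, ∀ b ∈ B, ({x, a, b} : Finset V) ∈ E ∧ ({y, a, b} : Finset V) ∈ E) :
    ∃ v : ZMod (2 * k) → V,
      Function.Injective v ∧ (∀ i, v i ≠ x ∧ v i ≠ y) ∧
      ∀ i, ({x, v i, v (i + 1)} : Finset V) ∈ E ∧
           ({y, v i, v (i + 1)} : Finset V) ∈ E := by
  haveI : NeZero (2 * k) := ⟨by omega⟩
  haveI : Fact (1 < 2 * k) := ⟨by omega⟩
  set av : Fin k → V := fun i => A.orderEmbOfFin hA i with hav
  set bv : Fin k → V := fun i => B.orderEmbOfFin hB i with hbv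
  refine ⟨fun i => if i.val % 2 = 0
      then av ⟨i.val / 2, by have := ZMod.val_lt i; omega⟩
      else bv ⟨i.val / 2, by have := ZMod.val_lt i; omega⟩, ?_, ?_, ?_⟩
  · intro i j hij
    have hvi := ZMod.val_lt i
    have hvj := ZMod.val_lt j
    by_cases hi : i.val % 2 = 0 <;> by_cases hj : j.val % 2 = 0 <;>
      simp only [hi, hj, if_true, if_false, ite_true, ite_false] at hij
    · have h2 : (⟨i.val / 2, by omega⟩ : Fin k) = ⟨j.val / 2, by omega⟩ :=
        (A.orderEmbOfFin hA).injective hij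
      have : i.val / 2 = j.val / 2 := by simpa using congrArg Fin.val h2
      exact ZMod.val_injective _ (by omega)
    · have ha : av ⟨i.val / 2, by omega⟩ ∈ A := A.orderEmbOfFin_mem hA _
      have hb : bv ⟨j.val / 2, by omega⟩ ∈ B := B.orderEmbOfFin_mem hB _
      rw [hij] at ha
      exact (Finset.disjoint_left.mp hAB ha hb).elim
    · have ha : av ⟨j.val / 2, by omega⟩ ∈ A := A.orderEmbOfFin_mem hA _
      have hb : bv ⟨i.val / 2, by omega⟩ ∈ B := B.orderEmbOfFin_mem hB _
      rw [← hij] at ha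
      exact (Finset.disjoint_left.mp hAB ha hb).elim
    · have h2 : (⟨i.val / 2, by omega⟩ : Fin k) = ⟨j.val / 2, by omega⟩ :=
        (B.orderEmbOfFin hB).injective hij
      have : i.val / 2 = j.val / 2 := by simpa using congrArg Fin.val h2
      exact ZMod.val_injective _ (by omega)
  · intro i
    by_cases hi : i.val % 2 = 0 <;> simp only [hi, if_true, if_false, ite_true, ite_false]
    · exact hAxy _ (A.orderEmbOfFin_mem hA _)
    · exact hBxy _ (B.orderEmbOfFin_mem hB _)
  · intro i
    have hval : (i + 1).val = (i.val + 1) % (2 * k) := by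
      rw [ZMod.val_add, ZMod.val_one]
    have hpar : (i + 1).val % 2 = (i.val + 1) % 2 := by
      rw [hval, Nat.mod_mod_of_dvd _ ⟨k, rfl⟩]
    by_cases hi : i.val % 2 = 0
    · have hi1 : ¬ (i + 1).val % 2 = 0 := by omega
      simp only [hi, hi1, if_true, if_false, ite_true, ite_false]
      exact hadj _ (A.orderEmbOfFin_mem hA _) _ (B.orderEmbOfFin_mem hB _)
    · have hi1 : (i + 1).val % 2 = 0 := by omega
      simp only [hi, hi1, if_true, if_false, ite_true, ite_false]
      have h := hadj _ (A.orderEmbOfFin_mem hA ⟨(i+1).val / 2, by have := ZMod.val_lt (i+1); omega⟩)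
        _ (B.orderEmbOfFin_mem hB ⟨i.val / 2, by have := ZMod.val_lt i; omega⟩)
      have hcomm : ∀ u w : V, ({x, u, w} : Finset V) = {x, w, u} ∧ ({y, u, w} : Finset V) = {y, w, u} := by
        intro u w
        constructor <;> · ext z; simp only [Finset.mem_insert, Finset.mem_singleton]; tauto
      constructor
      · rw [(hcomm _ _).1]; exact h.1
      · rw [(hcomm _ _).2]; exact h.2

set_option maxHeartbeats 4000000 in
/-- for every `δ > 0` and integer `k ≥ 2` there is `n₀` such that for all
`n ≥ n₀`, if `H` is a 3-graph on `n` vertices and `T` a set of vertices meeting at least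
`δ n³` edges, then `H` contains a double pyramid on `2k+2` vertices with both apexes in `T`. -/
theorem statement6 (δ : ℝ) (hδ : 0 < δ) (k : ℕ) (hk : 2 ≤ k) :
    ∃ n₀ : ℕ, ∀ n : ℕ, n₀ ≤ n →
      ∀ (V : Type) [Fintype V] [DecidableEq V], Fintype.card V = n →
        ∀ E : Finset (Finset V), (∀ e ∈ E, e.card = 3) →
          ∀ T : Finset V,
            δ * n ^ 3 ≤ ((E.filter fun e => ∃ t ∈ T, t ∈ e).card : ℝ) →
            ∃ x ∈ T, ∃ y ∈ T, x ≠ y ∧ ∃ v : ZMod (2 * k) → V,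
              Function.Injective v ∧ (∀ i, v i ≠ x ∧ v i ≠ y) ∧
              ∀ i, ({x, v i, v (i + 1)} : Finset V) ∈ E ∧
                   ({y, v i, v (i + 1)} : Finset V) ∈ E := by
  set c : ℝ := δ ^ 2 / 2 with hc
  have hcpos : 0 < c := by positivity
  refine ⟨⌈(1 : ℝ) + 2 / δ ^ 2 + 4 * k / δ ^ 2 + (2 * k + 2) * (4 / δ ^ 2) ^ k⌉₊, ?_⟩
  intro n hn V _ _ hcard E hE3 T hT
  letI : LinearOrder V := LinearOrder.lift' (Fintype.equivFin V) (Fintype.equivFin V).injective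
  set N : ℝ := (n : ℝ) with hN
  have hbounds : (1 : ℝ) + 2 / δ ^ 2 + 4 * k / δ ^ 2 + (2 * k + 2) * (4 / δ ^ 2) ^ k ≤ N := by
    exact_mod_cast (Nat.ceil_le.mp (le_refl _)).trans (Nat.cast_le.mpr hn)
  have ht1 : (0:ℝ) ≤ 2 / δ ^ 2 := by positivity
  have ht2 : (0:ℝ) ≤ 4 * k / δ ^ 2 := by positivity
  have ht3 : (0:ℝ) ≤ (2 * k + 2) * (4 / δ ^ 2) ^ k := by positivity
  have hN1 : (1:ℝ) ≤ N := by linarith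
  have hNpos : (0:ℝ) < N := by linarith
  have hnpos : 0 < n := by
    have h := hNpos
    rw [hN] at h
    exact_mod_cast h
  haveI : Nonempty V := by
    rw [← Fintype.card_pos_iff, hcard]
    exact hnpos
  classical
  set P : Finset (Finset V) := Finset.univ.powersetCard 2 with hP
  set D : Finset V → ℕ := fun p => (T.filter (fun t => t ∉ p ∧ insert t p ∈ E)).card with hD
  -- Step 1
  have h1 : (E.filter fun e => ∃ t ∈ T, t ∈ e).card ≤ ∑ p ∈ P, D p := by
    have hsig : ∑ p ∈ P, D p
        = (P.sigma fun p => T.filter (fun t => t ∉ p ∧ insert t p ∈ E)).card :=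
      (Finset.card_sigma _ _).symm
    rw [hsig]
    apply Finset.card_le_card_of_injOn (fun e =>
      if h : (e.filter (· ∈ T)).Nonempty
      then ⟨e.erase ((e.filter (· ∈ T)).min' h), (e.filter (· ∈ T)).min' h⟩
      else ⟨∅, Classical.arbitrary V⟩)
    · intro e he
      rw [Finset.mem_coe, Finset.mem_filter] at he
      obtain ⟨heE, t0, ht0T, ht0e⟩ := he
      have hne : (e.filter (· ∈ T)).Nonempty := ⟨t0, Finset.mem_filter.mpr ⟨ht0e, ht0T⟩⟩
      rw [Finset.mem_coe]
      dsimp only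
      rw [dif_pos hne]
      have htmem := Finset.min'_mem _ hne
      rw [Finset.mem_filter] at htmem
      apply Finset.mem_sigma.mpr
      constructor
      · rw [hP, Finset.mem_powersetCard]
        exact ⟨Finset.subset_univ _,
          by rw [Finset.card_erase_of_mem htmem.1, hE3 e heE]⟩
      · exact Finset.mem_filter.mpr ⟨htmem.2, Finset.notMem_erase _ _,
          by rw [Finset.insert_erase htmem.1]; exact heE⟩
    · intro e1 he1 e2 he2 heq
      rw [Finset.mem_coe, Finset.mem_filter] at he1 he2
      obtain ⟨he1E, t1, ht1T, ht1e⟩ := he1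
      obtain ⟨he2E, t2, ht2T, ht2e⟩ := he2
      have hne1 : (e1.filter (· ∈ T)).Nonempty := ⟨t1, Finset.mem_filter.mpr ⟨ht1e, ht1T⟩⟩
      have hne2 : (e2.filter (· ∈ T)).Nonempty := ⟨t2, Finset.mem_filter.mpr ⟨ht2e, ht2T⟩⟩
      dsimp only at heq
      rw [dif_pos hne1, dif_pos hne2] at heq
      have hfst := congrArg Sigma.fst heq
      have hsnd := congrArg (fun s : (_ : Finset V) × V => s.2) heq
      simp only at hfst hsnd
      have hm1 := Finset.min'_mem _ hne1
      have hm2 := Finset.min'_mem _ hne2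
      rw [Finset.mem_filter] at hm1 hm2
      calc e1 = insert ((e1.filter (· ∈ T)).min' hne1)
            (e1.erase ((e1.filter (· ∈ T)).min' hne1)) := (Finset.insert_erase hm1.1).symm
        _ = insert ((e2.filter (· ∈ T)).min' hne2)
            (e2.erase ((e2.filter (· ∈ T)).min' hne2)) := by rw [hfst, hsnd]
        _ = e2 := Finset.insert_erase hm2.1
  -- Step 2
  have h2 : ∑ p ∈ P, D p * (D p - 1) = ∑ a ∈ T.offDiag,
      (P.filter fun p => (a.1 ∉ p ∧ insert a.1 p ∈ E) ∧ (a.2 ∉ p ∧ insert a.2 p ∈ E)).card := by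
    have hd : ∀ p, D p * (D p - 1) = ∑ a ∈ T.offDiag,
        if (a.1 ∉ p ∧ insert a.1 p ∈ E) ∧ (a.2 ∉ p ∧ insert a.2 p ∈ E) then 1 else 0 := by
      intro p
      rw [← Finset.card_filter]
      have hfe : T.offDiag.filter
          (fun a => (a.1 ∉ p ∧ insert a.1 p ∈ E) ∧ (a.2 ∉ p ∧ insert a.2 p ∈ E))
          = (T.filter fun t => t ∉ p ∧ insert t p ∈ E).offDiag := by
        ext ⟨a, b⟩
        simp only [Finset.mem_filter, Finset.mem_offDiag]
        tauto
      rw [hfe, Finset.offDiag_card]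
      rw [hD]
      have hmul : ∀ d : ℕ, d * (d - 1) = d * d - d := by
        intro d
        cases d with
        | zero => rfl
        | succ m => rw [Nat.succ_sub_one, Nat.mul_succ, Nat.add_sub_cancel]
      exact hmul _
    simp_rw [hd, Finset.card_filter]
    exact Finset.sum_comm
  -- Step 3: real lower bound on the sum of codegrees
  have hDle : ∀ p, D p ≤ n := by
    intro p
    rw [hD]
    calc (Finset.filter (fun t => t ∉ p ∧ insert t p ∈ E) T).card
        ≤ T.card := Finset.card_le_card (Finset.filter_subset _ _)
      _ ≤ Fintype.card V := Finset.card_le_univ T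
      _ = n := hcard
  have hPcard : (P.card : ℝ) ≤ N ^ 2 := by
    rw [hP, Finset.card_powersetCard, Finset.card_univ, hcard]
    have : n.choose 2 ≤ n ^ 2 := by
      calc n.choose 2 = n * (n - 1) / 2 := Nat.choose_two_right n
        _ ≤ n * (n - 1) := Nat.div_le_self _ _
        _ ≤ n * n := Nat.mul_le_mul_left n (Nat.sub_le n 1)
        _ = n ^ 2 := (sq n).symm
    calc ((n.choose 2 : ℕ) : ℝ) ≤ ((n ^ 2 : ℕ) : ℝ) := Nat.cast_le.mpr this
      _ = N ^ 2 := by push_cast; rw [hN]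
  have hsum1 : δ * N ^ 3 ≤ ∑ p ∈ P, (D p : ℝ) := by
    calc δ * N ^ 3 ≤ ((E.filter fun e => ∃ t ∈ T, t ∈ e).card : ℝ) := hT
      _ ≤ ((∑ p ∈ P, D p : ℕ) : ℝ) := Nat.cast_le.mpr h1
      _ = ∑ p ∈ P, (D p : ℝ) := by push_cast; rfl
  have hPne : P.Nonempty := by
    by_contra hcon
    rw [Finset.not_nonempty_iff_eq_empty] at hcon
    rw [hcon, Finset.sum_empty] at hsum1
    have := mul_pos hδ (pow_pos hNpos 3)
    linarith
  have hPpos : (0 : ℝ) < P.card := by exact_mod_cast Finset.card_pos.mpr hPne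
  have hCS : (∑ p ∈ P, (D p : ℝ)) ^ 2 / (P.card : ℝ) ≤ ∑ p ∈ P, (D p : ℝ) ^ 2 := by
    have := pow_sum_div_card_le_sum_pow (s := P) (f := fun p => (D p : ℝ))
      (fun i _ => Nat.cast_nonneg _) 1
    simpa using this
  have hsq : δ ^ 2 * N ^ 4 ≤ ∑ p ∈ P, (D p : ℝ) ^ 2 := by
    have hnum : (δ * N ^ 3) ^ 2 ≤ (∑ p ∈ P, (D p : ℝ)) ^ 2 := by
      apply pow_le_pow_left₀ (by positivity) hsum1
    have hN2 : N ^ 2 ≠ 0 := by positivity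
    have hstep1 : δ ^ 2 * N ^ 4 = (δ * N ^ 3) ^ 2 / N ^ 2 := by
      rw [eq_div_iff hN2]
      ring
    rw [hstep1]
    calc (δ * N ^ 3) ^ 2 / N ^ 2 ≤ (∑ p ∈ P, (D p : ℝ)) ^ 2 / N ^ 2 :=
          div_le_div_of_nonneg_right hnum (by positivity)
      _ ≤ (∑ p ∈ P, (D p : ℝ)) ^ 2 / (P.card : ℝ) :=
          div_le_div_of_nonneg_left (sq_nonneg _) hPpos hPcard
      _ ≤ ∑ p ∈ P, (D p : ℝ) ^ 2 := hCS
  have hsumD : ∑ p ∈ P, (D p : ℝ) ≤ N ^ 3 := by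
    calc ∑ p ∈ P, (D p : ℝ) ≤ ∑ _p ∈ P, N := by
          apply Finset.sum_le_sum
          intro p _
          rw [hN]
          exact_mod_cast hDle p
      _ = (P.card : ℝ) * N := by rw [Finset.sum_const, nsmul_eq_mul]
      _ ≤ N ^ 2 * N := mul_le_mul_of_nonneg_right hPcard hNpos.le
      _ = N ^ 3 := by ring
  have h3 : c * N ^ 4 ≤ ∑ p ∈ P, ((D p * (D p - 1) : ℕ) : ℝ) := by
    have key : ∀ p ∈ P, (D p : ℝ) ^ 2 - (D p : ℝ) ≤ ((D p * (D p - 1) : ℕ) : ℝ) := by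
      intro p _
      rcases Nat.eq_zero_or_pos (D p) with h0 | h0
      · simp [h0]
      · rw [Nat.cast_mul, Nat.cast_sub h0]
        push_cast
        exact le_of_eq (by ring)
    have hNbig : 2 / δ ^ 2 ≤ N := by linarith
    have hfirst : c * N ^ 4 ≤ δ ^ 2 * N ^ 4 - N ^ 3 := by
      have e1 : δ ^ 2 / 2 * (2 / δ ^ 2) = 1 := by
        field_simp
      have h1' : 1 ≤ δ ^ 2 / 2 * N := by
        have := mul_le_mul_of_nonneg_left hNbig
          (le_of_lt (show (0:ℝ) < δ ^ 2 / 2 by positivity))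
        rw [e1] at this
        exact this
      have hkey : N ^ 3 ≤ δ ^ 2 / 2 * N ^ 4 := by
        calc N ^ 3 = 1 * N ^ 3 := (one_mul _).symm
          _ ≤ (δ ^ 2 / 2 * N) * N ^ 3 := mul_le_mul_of_nonneg_right h1' (by positivity)
          _ = δ ^ 2 / 2 * N ^ 4 := by ring
      rw [hc]
      linarith
    calc c * N ^ 4 ≤ δ ^ 2 * N ^ 4 - N ^ 3 := hfirst
      _ ≤ (∑ p ∈ P, (D p : ℝ) ^ 2) - ∑ p ∈ P, (D p : ℝ) := by linarith
      _ = ∑ p ∈ P, ((D p : ℝ) ^ 2 - (D p : ℝ)) := (Finset.sum_sub_distrib _ _).symm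
      _ ≤ ∑ p ∈ P, ((D p * (D p - 1) : ℕ) : ℝ) := Finset.sum_le_sum key
  -- Step 4: find the two apexes
  have h4 : ∃ a ∈ T.offDiag, c * N ^ 2 ≤
      ((P.filter fun p => (a.1 ∉ p ∧ insert a.1 p ∈ E) ∧ (a.2 ∉ p ∧ insert a.2 p ∈ E)).card : ℝ) := by
    have h2' := congrArg (Nat.cast : ℕ → ℝ) h2
    push_cast at h2'
    push_cast at h3
    rw [h2'] at h3
    have hTod : ((T.offDiag).card : ℝ) ≤ N ^ 2 := by
      have hTn : T.card ≤ n := hcard ▸ Finset.card_le_univ T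
      rw [Finset.offDiag_card]
      calc ((T.card * T.card - T.card : ℕ) : ℝ) ≤ ((T.card * T.card : ℕ) : ℝ) :=
            Nat.cast_le.mpr (Nat.sub_le _ _)
        _ ≤ ((n * n : ℕ) : ℝ) := Nat.cast_le.mpr (Nat.mul_le_mul hTn hTn)
        _ = N ^ 2 := by push_cast; rw [hN]; ring
    by_contra hcon
    push_neg at hcon
    have hod_ne : T.offDiag.Nonempty := by
      by_contra h'
      rw [Finset.not_nonempty_iff_eq_empty] at h'
      rw [h', Finset.sum_empty] at h3
      have := mul_pos hcpos (pow_pos hNpos 4)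
      linarith
    have hlt : ∑ a ∈ T.offDiag, ((P.filter fun p => (a.1 ∉ p ∧ insert a.1 p ∈ E) ∧
        (a.2 ∉ p ∧ insert a.2 p ∈ E)).card : ℝ) < ∑ _a ∈ T.offDiag, c * N ^ 2 :=
      Finset.sum_lt_sum_of_nonempty hod_ne fun a ha => hcon a ha
    rw [Finset.sum_const, nsmul_eq_mul] at hlt
    have : ((T.offDiag.card : ℝ)) * (c * N ^ 2) ≤ c * N ^ 4 := by
      calc ((T.offDiag.card : ℝ)) * (c * N ^ 2) ≤ N ^ 2 * (c * N ^ 2) :=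
            mul_le_mul_of_nonneg_right hTod (by positivity)
        _ = c * N ^ 4 := by ring
    linarith
  obtain ⟨⟨x, y⟩, hxyT, hGcard⟩ := h4
  rw [Finset.mem_offDiag] at hxyT
  obtain ⟨hxT, hyT, hxy⟩ := hxyT
  set G : Finset (Finset V) :=
    P.filter (fun p => (x ∉ p ∧ insert x p ∈ E) ∧ (y ∉ p ∧ insert y p ∈ E)) with hG
  set Nb : V → Finset V := fun v => Finset.univ.filter (fun w => w ≠ v ∧ ({w, v} : Finset V) ∈ G)
    with hNb
  -- Step 5: degree sum
  have h5 : G.card ≤ ∑ v : V, (Nb v).card := by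
    have hsig : ∑ v : V, (Nb v).card = (Finset.univ.sigma Nb).card :=
      (Finset.card_sigma _ _).symm
    rw [hsig]
    have hpair : ∀ p ∈ G, ∀ h : p.Nonempty,
        ({p.max' h, p.min' h} : Finset V) = p ∧ p.min' h < p.max' h := by
      intro p hp h
      have hp2 : p.card = 2 := by
        have hpp := (Finset.mem_filter.mp hp).1
        rw [hP, Finset.mem_powersetCard] at hpp
        exact hpp.2
      have hlt := Finset.min'_lt_max'_of_card p (by omega)
      refine ⟨Finset.eq_of_subset_of_card_le ?_ ?_, hlt⟩
      · exact Finset.insert_subset (p.max'_mem h) (Finset.singleton_subset_iff.mpr (p.min'_mem h))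
      · rw [hp2, Finset.card_pair hlt.ne']
    apply Finset.card_le_card_of_injOn (fun p =>
      if h : p.Nonempty then ⟨p.min' h, p.max' h⟩
      else ⟨Classical.arbitrary V, Classical.arbitrary V⟩)
    · intro p hp
      have hp2 : p.card = 2 := by
        have hpp := (Finset.mem_filter.mp hp).1
        rw [hP, Finset.mem_powersetCard] at hpp
        exact hpp.2
      have hne : p.Nonempty := Finset.card_pos.mp (by omega)
      rw [Finset.mem_coe]
      dsimp only
      rw [dif_pos hne]
      obtain ⟨hpeq, hlt⟩ := hpair p hp hne
      apply Finset.mem_sigma.mpr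
      refine ⟨Finset.mem_univ _, ?_⟩
      rw [hNb]
      apply Finset.mem_filter.mpr
      exact ⟨Finset.mem_univ _, hlt.ne', by rw [hpeq]; exact hp⟩
    · intro p1 hp1 p2 hp2 heq
      rw [Finset.mem_coe] at hp1 hp2
      have hc1 : p1.card = 2 := by
        have hpp := (Finset.mem_filter.mp hp1).1
        rw [hP, Finset.mem_powersetCard] at hpp
        exact hpp.2
      have hc2 : p2.card = 2 := by
        have hpp := (Finset.mem_filter.mp hp2).1
        rw [hP, Finset.mem_powersetCard] at hpp
        exact hpp.2
      have hne1 : p1.Nonempty := Finset.card_pos.mp (by omega)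
      have hne2 : p2.Nonempty := Finset.card_pos.mp (by omega)
      dsimp only at heq
      rw [dif_pos hne1, dif_pos hne2] at heq
      have hmin := congrArg Sigma.fst heq
      have hmax := congrArg (fun s : (_ : V) × V => s.2) heq
      simp only at hmin hmax
      calc p1 = {p1.max' hne1, p1.min' hne1} := ((hpair p1 hp1 hne1).1).symm
        _ = {p2.max' hne2, p2.min' hne2} := by rw [hmin, hmax]
        _ = p2 := (hpair p2 hp2 hne2).1
  -- Step 7/8: many injective k-tuples with large common neighbourhood
  have h8 : (2 * k + 2) * N ^ k ≤
      ∑ u : Fin k → V, ((Finset.univ.filter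
        (fun v => Function.Injective u ∧ ∀ i, u i ∈ Nb v)).card : ℝ) := by
    have hdeg : c * N ^ 2 ≤ ∑ v : V, ((Nb v).card : ℝ) := by
      calc c * N ^ 2 ≤ (G.card : ℝ) := hGcard
        _ ≤ ((∑ v : V, (Nb v).card : ℕ) : ℝ) := Nat.cast_le.mpr h5
        _ = ∑ v : V, ((Nb v).card : ℝ) := by push_cast; rfl
    have hcastsub : ∀ a b : ℕ, (a:ℝ) - (b:ℝ) ≤ ((a - b : ℕ) : ℝ) := by
      intro a b
      rcases le_total b a with h | h
      · rw [Nat.cast_sub h]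
      · rw [Nat.sub_eq_zero_of_le h, Nat.cast_zero]
        have h' : (a:ℝ) ≤ (b:ℝ) := Nat.cast_le.mpr h
        linarith
    have hkN : (4:ℝ) * k / δ ^ 2 ≤ N := by linarith
    have hdegk : c / 2 * N ^ 2 ≤ ∑ v : V, (((Nb v).card - k : ℕ) : ℝ) := by
      have hconst : ∑ _v : V, (k:ℝ) = N * k := by
        rw [Finset.sum_const, Finset.card_univ, hcard, nsmul_eq_mul, hN]
      have hlow : ∑ v : V, ((Nb v).card : ℝ) - N * k
          ≤ ∑ v : V, (((Nb v).card - k : ℕ) : ℝ) := by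
        rw [← hconst, ← Finset.sum_sub_distrib]
        exact Finset.sum_le_sum fun v _ => hcastsub _ _
      have h1' : (k:ℝ) ≤ c / 2 * N := by
        have e1 : c / 2 * (4 * k / δ ^ 2) = k := by
          rw [hc]
          field_simp
          ring
        calc (k:ℝ) = c / 2 * (4 * k / δ ^ 2) := e1.symm
          _ ≤ c / 2 * N := mul_le_mul_of_nonneg_left hkN (by positivity)
      have h2'' : N * k ≤ c / 2 * N ^ 2 := by
        calc N * k ≤ N * (c / 2 * N) := mul_le_mul_of_nonneg_left h1' hNpos.le
          _ = c / 2 * N ^ 2 := by ring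
      linarith
    have hpm0 := pow_sum_div_card_le_sum_pow (s := (Finset.univ : Finset V))
      (f := fun v => (((Nb v).card - k : ℕ) : ℝ)) (fun i _ => Nat.cast_nonneg _) (k - 1)
    have hk1 : k - 1 + 1 = k := by omega
    rw [hk1, Finset.card_univ, hcard, ← hN] at hpm0
    have hnum : (c / 2 * N ^ 2) ^ k ≤ (∑ v : V, (((Nb v).card - k : ℕ) : ℝ)) ^ k :=
      pow_le_pow_left₀ (by positivity) hdegk k
    have hlhs2 : (c / 2 * N ^ 2) ^ k / N ^ (k - 1)
        ≤ ∑ v : V, (((Nb v).card - k : ℕ) : ℝ) ^ k :=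
      le_trans (div_le_div_of_nonneg_right hnum (by positivity)) hpm0
    have hne : N ^ (k - 1) ≠ 0 := by positivity
    have hsimp : (c / 2 * N ^ 2) ^ k / N ^ (k - 1) = (c / 2) ^ k * N ^ (k + 1) := by
      rw [mul_pow, ← pow_mul, show 2 * k = (k + 1) + (k - 1) from by omega, pow_add,
        ← mul_assoc, mul_div_assoc, div_self hne, mul_one]
    have hfinal1 : (2 * (k:ℝ) + 2) * N ^ k ≤ (c / 2) ^ k * N ^ (k + 1) := by
      have hNb2 : (2 * (k:ℝ) + 2) * (4 / δ ^ 2) ^ k ≤ N := by linarith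
      have hcc : (c / 2) ^ k * (4 / δ ^ 2) ^ k = 1 := by
        rw [hc, ← mul_pow]
        have e3 : δ ^ 2 / 2 / 2 * (4 / δ ^ 2) = 1 := by
          field_simp
          ring
        rw [e3, one_pow]
      have h1' : (2 * (k:ℝ) + 2) ≤ (c / 2) ^ k * N := by
        have hmul := mul_le_mul_of_nonneg_left hNb2
          (show (0:ℝ) ≤ (c / 2) ^ k by positivity)
        have e2 : (c / 2) ^ k * ((2 * (k:ℝ) + 2) * (4 / δ ^ 2) ^ k) = 2 * (k:ℝ) + 2 := by
          calc (c / 2) ^ k * ((2 * (k:ℝ) + 2) * (4 / δ ^ 2) ^ k)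
              = (2 * (k:ℝ) + 2) * ((c / 2) ^ k * (4 / δ ^ 2) ^ k) := by ring
            _ = 2 * (k:ℝ) + 2 := by rw [hcc, mul_one]
        rw [e2] at hmul
        exact hmul
      calc (2 * (k:ℝ) + 2) * N ^ k ≤ ((c / 2) ^ k * N) * N ^ k :=
            mul_le_mul_of_nonneg_right h1' (by positivity)
        _ = (c / 2) ^ k * N ^ (k + 1) := by ring
    have hper : ∀ v : V, (((Nb v).card - k : ℕ) : ℝ) ^ k
        ≤ ((((Nb v).card).descFactorial k : ℕ) : ℝ) := by
      intro v
      rw [← Nat.cast_pow]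
      exact Nat.cast_le.mpr (aux_desc_lb _ k)
    have hidN : ∑ v : V, ((Nb v).card).descFactorial k
        = ∑ u : Fin k → V, (Finset.univ.filter
          (fun v => Function.Injective u ∧ ∀ i, u i ∈ Nb v)).card := by
      have hcnt : ∀ v : V, ((Nb v).card).descFactorial k
          = ((Finset.univ : Finset (Fin k → V)).filter
            (fun u => Function.Injective u ∧ ∀ i, u i ∈ Nb v)).card :=
        fun v => (aux_inj_count k (Nb v)).symm
      simp_rw [hcnt, Finset.card_filter]
      exact Finset.sum_comm
    calc (2 * (k:ℝ) + 2) * N ^ k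
        ≤ (c / 2) ^ k * N ^ (k + 1) := hfinal1
      _ = (c / 2 * N ^ 2) ^ k / N ^ (k - 1) := hsimp.symm
      _ ≤ ∑ v : V, (((Nb v).card - k : ℕ) : ℝ) ^ k := hlhs2
      _ ≤ ∑ v : V, ((((Nb v).card).descFactorial k : ℕ) : ℝ) :=
          Finset.sum_le_sum fun v _ => hper v
      _ = ((∑ v : V, ((Nb v).card).descFactorial k : ℕ) : ℝ) := by push_cast; rfl
      _ = ((∑ u : Fin k → V, (Finset.univ.filter
            (fun v => Function.Injective u ∧ ∀ i, u i ∈ Nb v)).card : ℕ) : ℝ) := by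
          rw [hidN]
      _ = ∑ u : Fin k → V, ((Finset.univ.filter
            (fun v => Function.Injective u ∧ ∀ i, u i ∈ Nb v)).card : ℝ) := by
          push_cast; rfl
  -- Step 9: pigeonhole
  have h9 : ∃ u : Fin k → V, 2 * k + 2 ≤
      (Finset.univ.filter (fun v => Function.Injective u ∧ ∀ i, u i ∈ Nb v)).card := by
    by_contra hcon
    push_neg at hcon
    have hb : ∑ u : Fin k → V, ((Finset.univ.filter
        (fun v => Function.Injective u ∧ ∀ i, u i ∈ Nb v)).card : ℝ)
        ≤ (2 * k + 1) * N ^ k := by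
      have hstep : ∀ u : Fin k → V, ((Finset.univ.filter
          (fun v => Function.Injective u ∧ ∀ i, u i ∈ Nb v)).card : ℝ) ≤ (2 * k + 1 : ℝ) := by
        intro u
        have := hcon u
        have h' : (Finset.univ.filter
            (fun v => Function.Injective u ∧ ∀ i, u i ∈ Nb v)).card ≤ 2 * k + 1 := by omega
        calc ((Finset.univ.filter
            (fun v => Function.Injective u ∧ ∀ i, u i ∈ Nb v)).card : ℝ)
            ≤ ((2 * k + 1 : ℕ) : ℝ) := Nat.cast_le.mpr h'
          _ = (2 * k + 1 : ℝ) := by push_cast; ring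
      calc ∑ u : Fin k → V, ((Finset.univ.filter
          (fun v => Function.Injective u ∧ ∀ i, u i ∈ Nb v)).card : ℝ)
          ≤ ∑ _u : Fin k → V, (2 * k + 1 : ℝ) := Finset.sum_le_sum fun u _ => hstep u
        _ = (Fintype.card (Fin k → V) : ℝ) * (2 * k + 1 : ℝ) := by
            rw [Finset.sum_const, Finset.card_univ, nsmul_eq_mul]
        _ = N ^ k * (2 * k + 1 : ℝ) := by
            rw [Fintype.card_fun, Fintype.card_fin, hcard]; push_cast; rw [hN]
        _ = (2 * k + 1) * N ^ k := by ring
    have hNk : (0:ℝ) < N ^ k := pow_pos hNpos k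
    have hchain := le_trans h8 hb
    have h2' : (2 * (k:ℝ) + 2) ≤ 2 * k + 1 := le_of_mul_le_mul_right hchain hNk
    linarith
  obtain ⟨u, hu⟩ := h9
  set W : Finset V := Finset.univ.filter (fun v => Function.Injective u ∧ ∀ i, u i ∈ Nb v) with hW
  have hWne : W.Nonempty := Finset.card_pos.mp (by omega)
  obtain ⟨v₀, hv₀⟩ := hWne
  have huinj : Function.Injective u := (Finset.mem_filter.mp hv₀).2.1
  set B : Finset V := Finset.univ.image u with hB
  have hBcard : B.card = k := by
    rw [hB, Finset.card_image_of_injective _ huinj, Finset.card_univ, Fintype.card_fin]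
  have hWB : k ≤ (W \ B).card := by
    have := Finset.le_card_sdiff B W
    omega
  obtain ⟨A, hAsub, hAcard⟩ := Finset.exists_subset_card_eq hWB
  -- facts about A and B
  have hmemG : ∀ a ∈ A, ∀ b ∈ B, b ≠ a ∧ ({b, a} : Finset V) ∈ G := by
    intro a ha b hb
    obtain ⟨i, _, rfl⟩ := Finset.mem_image.mp hb
    have haW : a ∈ W := (Finset.mem_sdiff.mp (hAsub ha)).1
    have := (Finset.mem_filter.mp haW).2.2 i
    rw [hNb] at this
    exact (Finset.mem_filter.mp this).2
  have hedge : ∀ a ∈ A, ∀ b ∈ B,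
      x ∉ ({b, a} : Finset V) ∧ y ∉ ({b, a} : Finset V) ∧
      ({x, a, b} : Finset V) ∈ E ∧ ({y, a, b} : Finset V) ∈ E := by
    intro a ha b hb
    obtain ⟨hba, hbaG⟩ := hmemG a ha b hb
    rw [hG, Finset.mem_filter] at hbaG
    obtain ⟨hp, ⟨hx1, hx2⟩, hy1, hy2⟩ := hbaG
    have hswap : ∀ z : V, ({z, a, b} : Finset V) = insert z ({b, a} : Finset V) := by
      intro z
      ext w
      simp only [Finset.mem_insert, Finset.mem_singleton]
      tauto
    exact ⟨hx1, hy1, by rw [hswap]; exact hx2, by rw [hswap]; exact hy2⟩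
  have hBne : B.Nonempty := Finset.card_pos.mp (by omega)
  have hAne : A.Nonempty := Finset.card_pos.mp (by omega)
  obtain ⟨b₀, hb₀⟩ := hBne
  obtain ⟨a₀, ha₀⟩ := hAne
  refine ⟨x, hxT, y, hyT, hxy, ?_⟩
  apply aux_cycle k (by omega) E x y A B ?_ hAcard hBcard ?_ ?_ ?_
  · exact Finset.disjoint_left.mpr fun a ha hb => (Finset.mem_sdiff.mp (hAsub ha)).2 hb
  · intro a ha
    obtain ⟨h1', h2', _⟩ := hedge a ha b₀ hb₀
    have hamem : a ∈ ({b₀, a} : Finset V) := Finset.mem_insert_of_mem (Finset.mem_singleton_self a)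
    exact ⟨fun h => h1' (h ▸ hamem), fun h => h2' (h ▸ hamem)⟩
  · intro b hb
    obtain ⟨h1', h2', _⟩ := hedge a₀ ha₀ b hb
    have hbmem : b ∈ ({b, a₀} : Finset V) := Finset.mem_insert_self b {a₀}
    exact ⟨fun h => h1' (h ▸ hbmem), fun h => h2' (h ▸ hbmem)⟩
  · intro a ha b hb
    exact (hedge a ha b hb).2.2
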